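/- arXiv:2403.17950 — 2 statements merged into one kernel-verified Lean document; each statement's English description precedes it below -/
import Mathlib

section
/- For every connected graph G on N ≥ 2 vertices, the decreasing degree sequence of the N-chain (path graph), namely (2,…,2,1,1), is generalized-Lorenz majorized by the decreasing degree sequence of G; i.e., the N-chain is the minimum connected network under this partial order. -/
/-- Generalized (non-normalized) Lorenz majorization of `N`-arrays of naturals. -/
def GenLorenzMaj {N : ℕ} (X Y : Fin N → ℕ) : Prop :=
  ∀ j : Fin N, ∑ k ∈ Finset.Iic j, X k ≤ ∑ k ∈ Finset.Iic j, Y k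

/-- The decreasing degree sequence of the `N`-chain (path graph):
`N - 2` twos followed by two ones. -/
def chainSeq (N : ℕ) : Fin N → ℕ := fun j => if (j : ℕ) < N - 2 then 2 else 1

/-- A connected graph has at least `card V - 1` edges. -/
lemma connected_card_edges {V : Type*} [Fintype V] [DecidableEq V]
    (G : SimpleGraph V) [DecidableRel G.Adj] (hconn : G.Connected) :
    Fintype.card V - 1 ≤ G.edgeFinset.card := by
  have hne : Nonempty V := hconn.nonempty
  obtain ⟨v₀⟩ := hne
  -- every vertex other than v₀ has a neighbor strictly closer to v₀
  have key : ∀ w : V, ∃ u : V, w ≠ v₀ → G.Adj w u ∧ G.dist u v₀ + 1 = G.dist w v₀ := by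
    intro w
    by_cases hw : w = v₀
    · exact ⟨v₀, fun h => absurd hw h⟩
    · obtain ⟨p, hp⟩ := (hconn.preconnected w v₀).exists_walk_length_eq_dist
      cases p with
      | nil => exact absurd rfl hw
      | @cons _ u _ hadj q =>
        refine ⟨u, fun _ => ⟨hadj, ?_⟩⟩
        simp only [SimpleGraph.Walk.length_cons] at hp
        have h1 : G.dist u v₀ ≤ q.length := G.dist_le q
        have h2 : G.dist w v₀ ≤ G.dist w u + G.dist u v₀ :=
          hconn.dist_triangle
        have h3 : G.dist w u = 1 := SimpleGraph.dist_eq_one_iff_adj.mpr hadj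
        omega
  choose f hf using key
  have hinj : Set.InjOn (fun w => s(w, f w)) ↑(({v₀} : Finset V)ᶜ) := by
    intro a ha b hb hab
    simp only [Finset.coe_compl, Finset.coe_singleton, Set.mem_compl_iff,
      Set.mem_singleton_iff] at ha hb
    simp only [Sym2.eq, Sym2.rel_iff', Prod.mk.injEq, Prod.swap_prod_mk] at hab
    rcases hab with ⟨h1, _⟩ | ⟨h1, h2⟩
    · exact h1
    · exfalso
      have hfa := (hf a ha).2
      have hfb := (hf b hb).2
      rw [h2] at hfa
      rw [← h1] at hfb
      omega
  have hmaps : ∀ w ∈ (({v₀} : Finset V)ᶜ : Finset V), s(w, f w) ∈ G.edgeFinset := by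
    intro w hw
    rw [Finset.mem_compl, Finset.mem_singleton] at hw
    rw [SimpleGraph.mem_edgeFinset, SimpleGraph.mem_edgeSet]
    exact (hf w hw).1
  have := Finset.card_le_card_of_injOn _ hmaps hinj
  rwa [Finset.card_compl, Finset.card_singleton] at this

theorem chain_is_minimum {V : Type*} [Fintype V] [DecidableEq V]
    (G : SimpleGraph V) [DecidableRel G.Adj]
    (N : ℕ) (hN : N = Fintype.card V) (h2 : 2 ≤ N) (hconn : G.Connected)
    (dG : Fin N → ℕ) (hGanti : Antitone dG)
    (hGseq : Multiset.map dG Finset.univ.val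
      = Multiset.map (fun v => G.degree v) (Finset.univ : Finset V).val) :
    GenLorenzMaj (chainSeq N) dG := by
  -- total sum of degrees
  have hsum : ∑ k, dG k = ∑ v, G.degree v := by
    rw [Finset.sum, Finset.sum, hGseq]
  have hT : 2 * (N - 1) ≤ ∑ k, dG k := by
    rw [hsum, SimpleGraph.sum_degrees_eq_twice_card_edges]
    have := connected_card_edges G hconn
    omega
  -- every degree is positive
  have hpos : ∀ k : Fin N, 1 ≤ dG k := by
    intro k
    have hk : dG k ∈ Multiset.map dG Finset.univ.val :=
      Multiset.mem_map.2 ⟨k, by simp, rfl⟩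
    rw [hGseq] at hk
    obtain ⟨v, _, hv⟩ := Multiset.mem_map.1 hk
    rw [← hv]
    -- v has a neighbor
    obtain ⟨w, hw⟩ := Fintype.exists_ne_of_one_lt_card (by omega) v
    obtain ⟨p⟩ := hconn.preconnected v w
    cases p with
    | nil => exact absurd rfl hw
    | @cons _ u _ hadj q =>
      have : 0 < G.degree v := G.degree_pos_iff_exists_adj v |>.2 ⟨u, hadj⟩
      omega
  intro j
  set n := (j : ℕ) with hn
  have hjN : n < N := j.isLt
  have hcard : (Finset.Iic j).card = n + 1 := by
    rw [Fin.card_Iic]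
  -- chain partial sum bounds
  have hchainA : ∑ k ∈ Finset.Iic j, chainSeq N k ≤ 2 * (n + 1) := by
    calc ∑ k ∈ Finset.Iic j, chainSeq N k ≤ (Finset.Iic j).card • 2 :=
          Finset.sum_le_card_nsmul _ _ 2 (by
            intro x _; unfold chainSeq; split <;> omega)
      _ = 2 * (n + 1) := by rw [hcard, smul_eq_mul]; ring
  have hchainB : ∑ k ∈ Finset.Iic j, chainSeq N k ≤ (n + 1) + (N - 2) := by
    have step1 : ∑ k ∈ Finset.Iic j, chainSeq N k
        ≤ ∑ k ∈ Finset.Iic j, (1 + if (k : ℕ) < N - 2 then 1 else 0) := by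
      apply Finset.sum_le_sum
      intro x _; unfold chainSeq; split <;> simp
    have step2 : ∑ k ∈ Finset.Iic j, (1 + if (k : ℕ) < N - 2 then 1 else 0)
        = (n + 1) + ∑ k ∈ Finset.Iic j, (if (k : ℕ) < N - 2 then 1 else 0) := by
      rw [Finset.sum_add_distrib, Finset.sum_const, hcard, smul_eq_mul, mul_one]
    have step3 : ∑ k ∈ Finset.Iic j, (if (k : ℕ) < N - 2 then (1:ℕ) else 0)
        ≤ ∑ k : Fin N, (if (k : ℕ) < N - 2 then (1:ℕ) else 0) := by
      apply Finset.sum_le_sum_of_subset (Finset.subset_univ _)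
    have step4 : ∑ k : Fin N, (if (k : ℕ) < N - 2 then (1:ℕ) else 0) = N - 2 := by
      rw [Fin.sum_univ_eq_sum_range (fun k => if k < N - 2 then (1:ℕ) else 0)]
      have : (Finset.range N).filter (fun k => k < N - 2) = Finset.range (N - 2) := by
        ext x; simp only [Finset.mem_filter, Finset.mem_range]; omega
      rw [← Finset.sum_filter, this, Finset.sum_const, smul_eq_mul, mul_one, Finset.card_range]
    omega
  -- degree side: case on dG j
  rcases Nat.lt_or_ge (dG j) 2 with hcase | hcase
  · -- dG j = 1 : all later entries are 1
    have hdGj : dG j = 1 := le_antisymm (by omega) (hpos j)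
    have hcompl : ∑ k ∈ (Finset.Iic j)ᶜ, dG k = N - (n + 1) := by
      have h1 : ∀ k ∈ (Finset.Iic j)ᶜ, dG k = 1 := by
        intro k hk
        rw [Finset.mem_compl, Finset.mem_Iic] at hk
        have hjk : j ≤ k := le_of_lt (lt_of_not_ge hk)
        have := hGanti hjk
        have := hpos k
        omega
      rw [Finset.sum_congr rfl h1, Finset.sum_const, smul_eq_mul, mul_one,
        Finset.card_compl, hcard, Fintype.card_fin]
    have hsplit : ∑ k ∈ Finset.Iic j, dG k + ∑ k ∈ (Finset.Iic j)ᶜ, dG k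
        = ∑ k, dG k := Finset.sum_add_sum_compl _ _
    omega
  · -- dG j ≥ 2 : all entries up to j are ≥ 2
    have hlow : 2 * (n + 1) ≤ ∑ k ∈ Finset.Iic j, dG k := by
      calc 2 * (n + 1) = (Finset.Iic j).card • 2 := by rw [hcard, smul_eq_mul]; ring
        _ ≤ ∑ k ∈ Finset.Iic j, dG k :=
          Finset.card_nsmul_le_sum _ _ 2 (by
            intro x hx
            rw [Finset.mem_Iic] at hx
            exact le_trans hcase (hGanti hx))
    omega
end

section
/- The sequence of M-spiders S_M (with N = 3M nodes) is DSWA but not DSWMd: its average degree (M²+3M)/(3M) satisfies (average degree)/ln(3M) → ∞, while its median degree equals 1 for all M ≥ 2. -/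
/-- The `M`-spider: a complete graph on the `M` hub vertices `(0, i)`, each hub
`(0, i)` additionally adjacent to the two pendant vertices `(1, i)` and `(2, i)`;
in total `N = 3M` vertices. -/
def spider (M : ℕ) : SimpleGraph (Fin 3 × Fin M) :=
  SimpleGraph.fromRel (fun a b => (a.1 = 0 ∧ b.1 = 0) ∨ (a.1 = 0 ∧ a.2 = b.2))

instance (M : ℕ) : DecidableRel (spider M).Adj := fun a b =>
  decidable_of_iff _ (SimpleGraph.fromRel_adj _ a b).symm

/-- The median of a (sorted) `N`-array: the middle entry for odd `N`,
the average of the two middle entries for even `N` (junk value `0` for `N = 0`). -/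
noncomputable def medOf {N : ℕ} (d : Fin N → ℕ) : ℝ :=
  if h : 0 < N then
    if N % 2 = 1 then (d ⟨N / 2, by omega⟩ : ℝ)
    else ((d ⟨N / 2 - 1, by omega⟩ : ℝ) + (d ⟨N / 2, by omega⟩ : ℝ)) / 2
  else 0

lemma neighborFinset_hub (M : ℕ) (i : Fin M) :
    (spider M).neighborFinset (0, i)
      = (({0} : Finset (Fin 3)) ×ˢ Finset.univ ∪ Finset.univ ×ˢ ({i} : Finset (Fin M))).erase (0, i) := by
  ext ⟨j, k⟩
  rw [SimpleGraph.mem_neighborFinset]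
  simp [SimpleGraph.mem_neighborFinset, spider, SimpleGraph.fromRel_adj, Prod.ext_iff, eq_comm]
  tauto

lemma deg_hub (M : ℕ) (i : Fin M) : (spider M).degree (0, i) = M + 1 := by
  have h := neighborFinset_hub M i
  have hmem : ((0 : Fin 3), i) ∈ (({0} : Finset (Fin 3)) ×ˢ Finset.univ ∪ Finset.univ ×ˢ ({i} : Finset (Fin M))) := by simp
  have hinter : (({0} : Finset (Fin 3)) ×ˢ Finset.univ ∩ Finset.univ ×ˢ ({i} : Finset (Fin M))) = {((0:Fin 3), i)} := by
    ext ⟨j, k⟩; simp [Prod.ext_iff]; aesop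
  have hcard := Finset.card_union_add_card_inter (({0} : Finset (Fin 3)) ×ˢ Finset.univ) (Finset.univ ×ˢ ({i} : Finset (Fin M)))
  rw [hinter, Finset.card_singleton, Finset.card_product, Finset.card_product] at hcard
  simp only [Finset.card_singleton, Finset.card_univ, Fintype.card_fin] at hcard
  rw [SimpleGraph.degree, h, Finset.card_erase_of_mem hmem]
  omega

lemma deg_pendant (M : ℕ) (j : Fin 3) (hj : j ≠ 0) (i : Fin M) :
    (spider M).degree (j, i) = 1 := by
  have h : (spider M).neighborFinset (j, i) = {((0 : Fin 3), i)} := by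
    ext ⟨k, l⟩
    rw [SimpleGraph.mem_neighborFinset]
    simp [SimpleGraph.mem_neighborFinset, spider, SimpleGraph.fromRel_adj, Prod.ext_iff, hj, Ne.symm hj, eq_comm]
    aesop
  rw [SimpleGraph.degree, h, Finset.card_singleton]

lemma spider_sum (M : ℕ) : ∑ v, (spider M).degree v = M ^ 2 + 3 * M := by
  rw [Fintype.sum_prod_type]
  rw [Fin.sum_univ_three]
  have h0 : ∀ i : Fin M, (spider M).degree (0, i) = M + 1 := deg_hub M
  have h1 : ∀ i : Fin M, (spider M).degree (1, i) = 1 := deg_pendant M 1 (by decide)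
  have h2 : ∀ i : Fin M, (spider M).degree (2, i) = 1 := deg_pendant M 2 (by decide)
  simp only [h0, h1, h2, Finset.sum_const, Finset.card_univ, Fintype.card_fin, smul_eq_mul,
    mul_one]
  ring

lemma spider_count (M : ℕ) (hM : 2 ≤ M) (d : Fin (3 * M) → ℕ)
    (hseq : Multiset.map d Finset.univ.val
      = Multiset.map (fun v => (spider M).degree v)
          (Finset.univ : Finset (Fin 3 × Fin M)).val) :
    (Finset.univ.filter (fun k => d k = M + 1)).card = M := by
  have h := congrArg (Multiset.count (M + 1)) hseq
  rw [Multiset.count_map, Multiset.count_map] at h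
  have hL : Multiset.filter (fun a => M + 1 = d a) Finset.univ.val
      = (Finset.univ.filter (fun k => d k = M + 1)).val := by
    rw [Finset.filter_val]
    exact Multiset.filter_congr (fun x _ => by constructor <;> exact Eq.symm)
  have hR : Multiset.filter (fun a => M + 1 = (spider M).degree a)
        (Finset.univ : Finset (Fin 3 × Fin M)).val
      = ((Finset.univ : Finset (Fin 3 × Fin M)).filter (fun v => v.1 = 0)).val := by
    rw [Finset.filter_val]
    apply Multiset.filter_congr
    rintro ⟨j, i⟩ _
    by_cases hj : j = 0
    · subst hj; simp [deg_hub]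
    · simp [deg_pendant M j hj, hj]
      omega
  rw [hL, hR] at h
  have hcard : ((Finset.univ : Finset (Fin 3 × Fin M)).filter (fun v => v.1 = 0)).card = M := by
    have he : (Finset.univ : Finset (Fin 3 × Fin M)).filter (fun v => v.1 = 0)
        = ({0} : Finset (Fin 3)) ×ˢ Finset.univ := by
      ext ⟨j, i⟩; simp [eq_comm]
    rw [he, Finset.card_product]; simp
  rw [Finset.card_def, h]
  rw [Finset.card_def] at hcard
  exact hcard

open Filter in
lemma xdivlog : Tendsto (fun x : ℝ => x / Real.log x) atTop atTop := by
  have h0 : Tendsto (fun x : ℝ => Real.log x / x) atTop (nhds 0) := by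
    simpa using Real.tendsto_pow_log_div_mul_add_atTop 1 0 1 one_ne_zero
  have hpos : ∀ᶠ x : ℝ in atTop, Real.log x / x ∈ Set.Ioi (0:ℝ) := by
    filter_upwards [eventually_gt_atTop (1:ℝ)] with x hx
    exact div_pos (Real.log_pos hx) (by linarith)
  have h1 : Tendsto (fun x : ℝ => Real.log x / x) atTop (nhdsWithin 0 (Set.Ioi 0)) :=
    tendsto_nhdsWithin_of_tendsto_nhds_of_eventually_within _ h0 hpos
  have h2 := h1.inv_tendsto_nhdsGT_zero
  refine h2.congr fun x => ?_
  simp [Pi.inv_apply, inv_div]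

open Filter in
lemma main_tendsto : Tendsto
      (fun M : ℕ => ((1 / (3 * (M : ℝ))) * ∑ v, ((spider M).degree v : ℝ))
        / Real.log (3 * (M : ℝ))) atTop atTop := by
  have h3M : Tendsto (fun M : ℕ => 3 * (M : ℝ)) atTop atTop :=
    (tendsto_natCast_atTop_atTop (R := ℝ)).const_mul_atTop (by norm_num)
  have hcomp : Tendsto (fun M : ℕ => (3 * (M : ℝ)) / Real.log (3 * (M : ℝ))) atTop atTop :=
    xdivlog.comp h3M
  have hg : Tendsto (fun M : ℕ => (1/9 : ℝ) * ((3 * (M : ℝ)) / Real.log (3 * (M : ℝ)))) atTop atTop :=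
    hcomp.const_mul_atTop (by norm_num)
  apply tendsto_atTop_mono' _ _ hg
  filter_upwards [eventually_ge_atTop 1] with M hM
  have hM0 : (1:ℝ) ≤ (M:ℝ) := by exact_mod_cast hM
  have hL : 0 < Real.log (3 * (M:ℝ)) := Real.log_pos (by nlinarith)
  have hsum : (∑ v, ((spider M).degree v : ℝ)) = (M:ℝ)^2 + 3*(M:ℝ) := by
    rw [← Nat.cast_sum, spider_sum]; push_cast; ring
  rw [hsum]
  have e2 : (1 / (3*(M:ℝ))) * ((M:ℝ)^2 + 3*(M:ℝ)) = ((M:ℝ)+3)/3 := by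
    field_simp
  rw [e2]
  have e1 : (1/9:ℝ) * ((3*(M:ℝ)) / Real.log (3*(M:ℝ))) = ((M:ℝ)/3) / Real.log (3*(M:ℝ)) := by
    ring
  rw [e1]
  gcongr
  linarith

lemma spider_med (M : ℕ) (hM : 2 ≤ M) (d : Fin (3 * M) → ℕ) (hanti : Antitone d)
    (hseq : Multiset.map d Finset.univ.val
      = Multiset.map (fun v => (spider M).degree v)
          (Finset.univ : Finset (Fin 3 × Fin M)).val) :
    medOf d = 1 := by
  have hvals : ∀ k : Fin (3 * M), d k = 1 ∨ d k = M + 1 := by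
    intro k
    have hk : d k ∈ Multiset.map d Finset.univ.val :=
      Multiset.mem_map_of_mem _ (by simp [Finset.mem_val])
    rw [hseq] at hk
    obtain ⟨⟨j, i⟩, -, hv⟩ := Multiset.mem_map.1 hk
    by_cases hj : j = 0
    · subst hj; right; rw [← hv, deg_hub]
    · left; rw [← hv, deg_pendant M j hj]
  have hcount := spider_count M hM d hseq
  have hone : ∀ k : Fin (3 * M), M ≤ (k : ℕ) → d k = 1 := by
    intro k hk
    rcases hvals k with h1 | h1
    · exact h1
    exfalso
    have hsub : Finset.Iic k ⊆ Finset.univ.filter (fun j => d j = M + 1) := by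
      intro j hj
      simp only [Finset.mem_Iic] at hj
      have hle := hanti hj
      rcases hvals j with h2 | h2
      · rw [h2] at hle; rw [h1] at hle; omega
      · simp [h2]
    have hcard2 := Finset.card_le_card hsub
    rw [hcount, Fin.card_Iic] at hcard2
    omega
  have hd1 : ∀ (h : 3 * M / 2 < 3 * M), d ⟨3 * M / 2, h⟩ = 1 :=
    fun h => hone _ (by simp; omega)
  have hd2 : ∀ (h : 3 * M / 2 - 1 < 3 * M), d ⟨3 * M / 2 - 1, h⟩ = 1 :=
    fun h => hone _ (by simp; omega)
  rw [medOf, dif_pos (by omega : 0 < 3 * M)]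
  split_ifs with hp
  · rw [hd1]; norm_num
  · rw [hd1, hd2]; norm_num

theorem spiders_DSWA_not_DSWMd
    (d : ∀ M : ℕ, Fin (3 * M) → ℕ) (hanti : ∀ M, Antitone (d M))
    (hseq : ∀ M, Multiset.map (d M) Finset.univ.val
      = Multiset.map (fun v => (spider M).degree v)
          (Finset.univ : Finset (Fin 3 × Fin M)).val) :
    (∀ M : ℕ, ∑ v, (spider M).degree v = M ^ 2 + 3 * M) ∧
    Filter.Tendsto
      (fun M : ℕ => ((1 / (3 * (M : ℝ))) * ∑ v, ((spider M).degree v : ℝ))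
        / Real.log (3 * (M : ℝ)))
      Filter.atTop Filter.atTop ∧
    (∀ M : ℕ, 2 ≤ M → medOf (d M) = 1) :=
  ⟨spider_sum, main_tendsto, fun M hM => spider_med M hM (d M) (hanti M) (hseq M)⟩
end
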